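/- Let a, b, r, δ, q⁰, k₀ > 0. Let q : [0,∞) → ℝ be continuous with 0 ≤ q(t) ≤ k₀ t for all t ≥ 0, and let π : [0,∞) → ℝ be a continuous nonnegative function satisfying, for all t ≥ 0, the integral equation π(t) = ∫_t^∞ exp( −∫_t^η (2a + δ + (b²/r) π(τ)) dτ ) (q(η) + q⁰) dη (all integrals being finite). Then for all t ≥ 0, π(t) ≤ (k₀/(2a)) t + k₀/(4a²) + q⁰/(2a). -/

import Mathlib

open MeasureTheory

/-- Linear-growth bound on the Riccati solution: if `0 ≤ q(t) ≤ k₀ t` and `π`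
is the nonnegative solution of the Riccati integral equation, then
`π(t) ≤ (k₀/(2a)) t + k₀/(4a²) + q⁰/(2a)` for all `t ≥ 0`. -/

lemma riccati_aux (t k0 q0 a : ℝ) (ht : 0 ≤ t) (ha : 0 < a) (hk0 : 0 < k0) (hq0 : 0 < q0) :
    IntegrableOn (fun η => Real.exp (-(2 * a * (η - t))) * (k0 * η + q0)) (Set.Ioi t) ∧
    (∫ η in Set.Ioi t, Real.exp (-(2 * a * (η - t))) * (k0 * η + q0))
      = (k0 / (2 * a)) * t + k0 / (4 * a ^ 2) + q0 / (2 * a) := by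
  set G : ℝ → ℝ := fun η => -(Real.exp (-(2 * a * (η - t))) * ((k0 * η + q0) / (2 * a) + k0 / (4 * a ^ 2))) with hG
  have h2a : (2 * a) ≠ 0 := by positivity
  have hderiv : ∀ x ∈ Set.Ioi t, HasDerivAt G (Real.exp (-(2 * a * (x - t))) * (k0 * x + q0)) x := by
    intro x hx
    have h1 : HasDerivAt (fun η : ℝ => -(2 * a * (η - t))) (-(2 * a)) x := by
      have := ((hasDerivAt_id x).sub_const t).const_mul (2 * a)
      exact (by simpa using this : HasDerivAt (fun y => 2 * a * (y - t)) (2 * a) x).neg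
    have h2 : HasDerivAt (fun η : ℝ => Real.exp (-(2 * a * (η - t))))
        (Real.exp (-(2 * a * (x - t))) * (-(2 * a))) x := h1.exp
    have h3 : HasDerivAt (fun η : ℝ => (k0 * η + q0) / (2 * a) + k0 / (4 * a ^ 2))
        (k0 / (2 * a)) x := by
      have h := ((((hasDerivAt_id x).const_mul k0).add_const q0).div_const (2 * a)).add_const
        (k0 / (4 * a ^ 2))
      convert h using 1
      · rfl
      · rfl
      · rfl
      · ring
    have := (h2.mul h3).neg
    convert this using 1
    · rfl
    · rfl
    · rfl
    · field_simp
      ring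
  have hcont : ContinuousOn G (Set.Ici t) := by fun_prop
  have hnn : ∀ x ∈ Set.Ioi t, 0 ≤ Real.exp (-(2 * a * (x - t))) * (k0 * x + q0) := by
    intro x hx
    have hxt : t < x := hx
    have : 0 ≤ k0 * x + q0 := by nlinarith [hq0.le, mul_nonneg hk0.le (ht.trans hxt.le)]
    positivity
  have htend : Filter.Tendsto G Filter.atTop (nhds 0) := by
    have hat : Filter.Tendsto (fun x : ℝ => (2*a) * x) Filter.atTop Filter.atTop :=
      Filter.Tendsto.const_mul_atTop (by positivity) Filter.tendsto_id
    have h1 : Filter.Tendsto (fun x : ℝ => x * Real.exp (-(2*a) * x)) Filter.atTop (nhds 0) := by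
      have := tendsto_rpow_mul_exp_neg_mul_atTop_nhds_zero 1 (2*a) (by positivity)
      simpa using this
    have h2 : Filter.Tendsto (fun x : ℝ => Real.exp (-(2*a) * x)) Filter.atTop (nhds 0) := by
      have h := Real.tendsto_exp_neg_atTop_nhds_zero.comp hat
      simp only [Function.comp_def] at h
      convert h using 2
      ring_nf
    have heq2 : G = fun x => -(Real.exp (2*a*t) *
        ((k0/(2*a)) * (x * Real.exp (-(2*a)*x)) + (q0/(2*a)+k0/(4*a^2)) * Real.exp (-(2*a)*x))) := by
      funext x
      rw [hG]
      simp only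
      rw [show -(2*a*(x-t)) = (2*a*t) + (-(2*a)*x) by ring, Real.exp_add]
      ring
    rw [heq2]
    have := (((h1.const_mul (k0/(2*a))).add (h2.const_mul (q0/(2*a)+k0/(4*a^2)))).const_mul
      (Real.exp (2*a*t))).neg
    simpa using this
  have hcw : ContinuousWithinAt G (Set.Ici t) t := hcont t Set.self_mem_Ici
  have hint := integrableOn_Ioi_deriv_of_nonneg hcw hderiv hnn htend
  have key := integral_Ioi_of_hasDerivAt_of_tendsto hcw hderiv hint htend
  refine ⟨hint, ?_⟩
  rw [key, hG]
  simp only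
  rw [sub_eq_iff_eq_add]
  field_simp
  simp only [sub_self, mul_zero, neg_zero, Real.exp_zero]
  ring

theorem riccati_linear_growth_bound (a b r δ q0 k0 : ℝ)
    (ha : 0 < a) (hb : 0 < b) (hr : 0 < r) (hδ : 0 < δ) (hq0 : 0 < q0)
    (hk0 : 0 < k0) (q π : ℝ → ℝ)
    (hqc : ContinuousOn q (Set.Ici 0))
    (hπc : ContinuousOn π (Set.Ici 0))
    (hq : ∀ t ≥ (0 : ℝ), 0 ≤ q t ∧ q t ≤ k0 * t)
    (hπnn : ∀ t ≥ (0 : ℝ), 0 ≤ π t)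
    (hInt : ∀ t ≥ (0 : ℝ), IntegrableOn
      (fun η => Real.exp (-(∫ τ in t..η, (2 * a + δ + (b ^ 2 / r) * π τ))) *
        (q η + q0)) (Set.Ioi t))
    (heq : ∀ t ≥ (0 : ℝ), π t = ∫ η in Set.Ioi t,
      Real.exp (-(∫ τ in t..η, (2 * a + δ + (b ^ 2 / r) * π τ))) *
        (q η + q0)) :
    ∀ t ≥ (0 : ℝ), π t ≤ (k0 / (2 * a)) * t + k0 / (4 * a ^ 2) + q0 / (2 * a) := by
  intro t ht
  obtain ⟨hauxInt, hauxVal⟩ := riccati_aux t k0 q0 a ht ha hk0 hq0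
  rw [heq t ht, ← hauxVal]
  apply setIntegral_mono_on (hInt t ht) hauxInt measurableSet_Ioi
  intro η hη
  have hηt : t < η := hη
  have hη0 : (0:ℝ) ≤ η := ht.trans hηt.le
  -- bound on the inner integral
  have hmono : 2 * a * (η - t) ≤ ∫ τ in t..η, (2 * a + δ + (b ^ 2 / r) * π τ) := by
    have hci : IntervalIntegrable (fun τ => 2 * a + δ + (b ^ 2 / r) * π τ) volume t η := by
      apply ContinuousOn.intervalIntegrable
      apply ContinuousOn.add continuousOn_const
      apply ContinuousOn.mul continuousOn_const
      apply hπc.mono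
      rw [Set.uIcc_of_le hηt.le]
      exact fun x hx => ht.trans hx.1
    have hconst : IntervalIntegrable (fun _ : ℝ => 2 * a) volume t η :=
      intervalIntegrable_const
    have := intervalIntegral.integral_mono_on hηt.le hconst hci (fun x hx => by
      have hx0 : (0:ℝ) ≤ x := ht.trans hx.1
      have hπx := hπnn x hx0
      have : 0 ≤ (b ^ 2 / r) * π x := by positivity
      linarith)
    simp only [intervalIntegral.integral_const, smul_eq_mul] at this
    linarith
  have hexp : Real.exp (-(∫ τ in t..η, (2 * a + δ + (b ^ 2 / r) * π τ)))
      ≤ Real.exp (-(2 * a * (η - t))) := Real.exp_le_exp.mpr (by linarith)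
  have hqb := hq η hη0
  have hqnn : 0 ≤ q η + q0 := by linarith [hqb.1]
  calc Real.exp (-(∫ τ in t..η, (2 * a + δ + (b ^ 2 / r) * π τ))) * (q η + q0)
      ≤ Real.exp (-(2 * a * (η - t))) * (q η + q0) :=
        mul_le_mul_of_nonneg_right hexp hqnn
    _ ≤ Real.exp (-(2 * a * (η - t))) * (k0 * η + q0) := by
        apply mul_le_mul_of_nonneg_left _ (Real.exp_nonneg _)
        linarith [hqb.2]
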